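/- Consider the 3×3 row-stochastic circulant-type matrix p with rows (a, b, 1−a−b), (b, 1−a−b, a), (1−a−b, a, b), where 0 < a, b, a+b < 1, and let N = (T/(3n))·p (the expected frequency matrix for equal cluster ratios α = (1/3,1/3,1/3) with n states per construction). Then the singular values of N are σ₁(N) = T/(3n) and σ₂(N) = σ₃(N) = (T/(3n))·√(1 + 3(a² − a + ab − b + b²)). -/

import Mathlib

theorem Matrix.isHermitian_transpose_mul_self {m n : Type*} [Fintype m]
    (A : Matrix m n ℝ) : (A.transpose * A).IsHermitian :=
  Matrix.isHermitian_conjTranspose_mul_self A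

/-- The singular values of a real `s × m` matrix, listed in decreasing order. -/
noncomputable def singularValues {s m : ℕ} (A : Matrix (Fin s) (Fin m) ℝ) : Fin m → ℝ :=
  fun i =>
    Real.sqrt
      ((Matrix.isHermitian_transpose_mul_self A).eigenvalues
        (Tuple.sort (Matrix.isHermitian_transpose_mul_self A).eigenvalues i.rev))

/-- The 3×3 circulant-type row-stochastic matrix with rows
`(a, b, 1-a-b)`, `(b, 1-a-b, a)`, `(1-a-b, a, b)`. -/
def pmat (a b : ℝ) : Matrix (Fin 3) (Fin 3) ℝ :=
  Matrix.of ![![a, b, 1 - a - b], ![b, 1 - a - b, a], ![1 - a - b, a, b]]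

set_option maxHeartbeats 1000000 in
private lemma det_aux (a b c t : ℝ) :
    Matrix.det (t • (1 : Matrix (Fin 3) (Fin 3) ℝ) -
        (Matrix.transpose (c • pmat a b) * (c • pmat a b))) =
      (t - c ^ 2) * (t - c ^ 2 * (1 + 3 * (a ^ 2 - a + a * b - b + b ^ 2))) ^ 2 := by
  simp only [Matrix.det_fin_three, Matrix.sub_apply, Matrix.smul_apply, Matrix.mul_apply,
    Matrix.transpose_apply, Fin.sum_univ_three, pmat, Matrix.of_apply, Matrix.cons_val',
    Matrix.cons_val_zero, Matrix.cons_val_one, Matrix.head_cons, Matrix.empty_val',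
    Matrix.cons_val_fin_one, Matrix.head_fin_const, smul_eq_mul, Matrix.cons_val_two,
    Matrix.tail_cons, Matrix.one_fin_three]
  ring

private lemma trace_aux (a b c : ℝ) :
    Matrix.trace (Matrix.transpose (c • pmat a b) * (c • pmat a b)) =
      c ^ 2 + 2 * (c ^ 2 * (1 + 3 * (a ^ 2 - a + a * b - b + b ^ 2))) := by
  simp only [Matrix.trace, Matrix.diag, Matrix.mul_apply, Matrix.transpose_apply,
    Fin.sum_univ_three, pmat, Matrix.of_apply, Matrix.cons_val', Matrix.cons_val_zero,
    Matrix.cons_val_one, Matrix.head_cons, Matrix.empty_val', Matrix.cons_val_fin_one,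
    Matrix.head_fin_const, Matrix.smul_apply, smul_eq_mul, Matrix.cons_val_two, Matrix.tail_cons]
  ring

theorem stmt_14 (a b : ℝ) (ha : 0 < a) (hb : 0 < b) (hab : a + b < 1)
    (T : ℝ) (hT : 0 < T) (n : ℕ) (hn : 0 < n) :
    singularValues ((T / (3 * n)) • pmat a b) 0 = T / (3 * n) ∧
    singularValues ((T / (3 * n)) • pmat a b) 1 =
      T / (3 * n) * Real.sqrt (1 + 3 * (a ^ 2 - a + a * b - b + b ^ 2)) ∧
    singularValues ((T / (3 * n)) • pmat a b) 2 =
      T / (3 * n) * Real.sqrt (1 + 3 * (a ^ 2 - a + a * b - b + b ^ 2)) := by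
  have hn' : (0 : ℝ) < n := by exact_mod_cast hn
  set c : ℝ := T / (3 * n) with hc
  have hcpos : 0 < c := div_pos hT (by positivity)
  set A : Matrix (Fin 3) (Fin 3) ℝ := c • pmat a b with hA
  set μ : ℝ := 1 + 3 * (a ^ 2 - a + a * b - b + b ^ 2) with hμ
  set x : ℝ := c ^ 2 with hx
  set y : ℝ := c ^ 2 * μ with hy
  have hB := Matrix.isHermitian_transpose_mul_self A
  set g : Fin 3 → ℝ := hB.eigenvalues with hg
  have hμlt : μ < 1 := by
    have h1 : 0 < a * (1 - a - b) := mul_pos ha (by linarith)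
    have h2 : 0 < b * (1 - b) := mul_pos hb (by linarith)
    nlinarith
  have hxy : y < x := by
    have := pow_pos hcpos 2
    rw [hy, hx]
    nlinarith
  -- each eigenvalue is x or y
  have hmem : ∀ i, g i = x ∨ g i = y := by
    intro i
    have hs := hB.eigenvalues_mem_spectrum_real i
    rw [spectrum.mem_iff, Matrix.isUnit_iff_isUnit_det, isUnit_iff_ne_zero, not_not,
      Algebra.algebraMap_eq_smul_one] at hs
    have hdet : (g i - x) * (g i - y) ^ 2 = 0 := by
      rw [hx, hy, hμ, ← det_aux a b c (g i)]
      exact hs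
    rcases mul_eq_zero.mp hdet with h | h
    · left; linarith [sub_eq_zero.mp h]
    · right; have := sq_eq_zero_iff.mp h; linarith
  -- trace = sum of eigenvalues
  have htr : g 0 + g 1 + g 2 = x + 2 * y := by
    have h1 : Matrix.trace (Matrix.conjTranspose A * A) = ∑ i, g i := by
      conv_lhs => rw [Matrix.conjTranspose_eq_transpose_of_trivial, hB.spectral_theorem, Unitary.conjStarAlgAut_apply]
      rw [Matrix.trace_mul_cycle]
      have hu : (star (hB.eigenvectorUnitary : Matrix (Fin 3) (Fin 3) ℝ)) *
          (hB.eigenvectorUnitary : Matrix (Fin 3) (Fin 3) ℝ) = 1 :=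
        Matrix.mem_unitaryGroup_iff'.mp hB.eigenvectorUnitary.2
      rw [hu, Matrix.one_mul, Matrix.trace_diagonal]
      simp [hg]
    rw [Matrix.conjTranspose_eq_transpose_of_trivial, trace_aux a b c, Fin.sum_univ_three] at h1
    rw [← hx, ← hy] at h1 ; linarith [h1]
  set σ := Tuple.sort g with hσ
  have hmono : Monotone (g ∘ σ) := Tuple.monotone_sort g
  have hsum : g (σ 0) + g (σ 1) + g (σ 2) = x + 2 * y := by
    have h := Equiv.sum_comp σ g
    rw [Fin.sum_univ_three, Fin.sum_univ_three] at h
    linarith [htr, h]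
  have m01 : g (σ 0) ≤ g (σ 1) := hmono (by decide : (0 : Fin 3) ≤ 1)
  have m12 : g (σ 1) ≤ g (σ 2) := hmono (by decide : (1 : Fin 3) ≤ 2)
  have key : g (σ 2) = x ∧ g (σ 1) = y ∧ g (σ 0) = y := by
    rcases hmem (σ 0) with h0 | h0 <;> rcases hmem (σ 1) with h1 | h1 <;>
      rcases hmem (σ 2) with h2 | h2 <;> exact ⟨by linarith, by linarith, by linarith⟩
  have hsqx : Real.sqrt x = c := by rw [hx, Real.sqrt_sq hcpos.le]
  have hsqy : Real.sqrt y = c * Real.sqrt μ := by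
    rw [hy, Real.sqrt_mul (sq_nonneg c), Real.sqrt_sq hcpos.le]
  refine ⟨?_, ?_, ?_⟩
  · show Real.sqrt (g (σ (Fin.rev 0))) = c
    rw [show (Fin.rev 0 : Fin 3) = 2 from by decide, key.1, hsqx]
  · show Real.sqrt (g (σ (Fin.rev 1))) = c * Real.sqrt μ
    rw [show (Fin.rev 1 : Fin 3) = 1 from by decide, key.2.1, hsqy]
  · show Real.sqrt (g (σ (Fin.rev 2))) = c * Real.sqrt μ
    rw [show (Fin.rev 2 : Fin 3) = 0 from by decide, key.2.2, hsqy]
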